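/- Let Ω₁ be a finite index set, A a fixed self-adjoint (real symmetric) Ω₁×Ω₁ matrix, and (V_i)_{i∈Ω₁} independent real random variables whose distributions all have densities bounded by ρ. Let D_V = Σ_{i∈Ω₁} V_i e_i⊗e_i. Then there is an absolute constant C such that for every κ > 0, the probability that the spectrum of D_V + A comes within distance κ of 0 (i.e., some eigenvalue of D_V + A has absolute value less than κ) is at most C·ρ·κ·|Ω₁|. -/

import Mathlib

open MeasureTheory ProbabilityTheory Real Matrix
open scoped ENNReal NNReal

namespace WegnerAux

variable {n : Type} [Fintype n] [DecidableEq n]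

/-- The shifted matrix `H - iκ` over `ℂ`. -/
noncomputable def Mz (A : Matrix n n ℝ) (κ : ℝ) (v : n → ℝ) : Matrix n n ℂ :=
  (Matrix.diagonal v + A).map (Complex.ofReal ·) - ((κ : ℂ) * Complex.I) • 1

lemma isHermitian_aux (A : Matrix n n ℝ) (hA : A.IsSymm) (v : n → ℝ) :
    ((Matrix.diagonal v + A).map (Complex.ofReal ·)).IsHermitian := by
  have hs : (Matrix.diagonal v + A).IsSymm := (Matrix.isSymm_diagonal v).add hA
  ext i j
  simp [Matrix.conjTranspose_apply, Matrix.map_apply, hs.apply i j]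

lemma det_shift_ne_zero {B : Matrix n n ℂ} (hB : B.IsHermitian) {κ : ℝ} (hκ : κ ≠ 0) :
    (B - ((κ : ℂ) * Complex.I) • 1).det ≠ 0 := by
  intro hdet
  obtain ⟨x, hx0, hx⟩ := (Matrix.exists_mulVec_eq_zero_iff).mpr hdet
  have hHx : B *ᵥ x = (((κ : ℂ) * Complex.I)) • x := by
    have h := hx
    rw [Matrix.sub_mulVec, Matrix.smul_mulVec, Matrix.one_mulVec, sub_eq_zero] at h
    exact h
  set c : ℂ := star x ⬝ᵥ (B *ᵥ x) with hc
  set s : ℂ := star x ⬝ᵥ x with hs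
  have hsstar : s = star s := Matrix.star_dotProduct x x
  have hstar : star c = c := by
    have h1 : star c = star (B *ᵥ x) ⬝ᵥ x := by
      rw [hc, Matrix.star_dotProduct, star_star]
    rw [Matrix.star_mulVec, hB.eq, ← Matrix.dotProduct_mulVec] at h1
    exact h1
  have hc2 : c = ((κ : ℂ) * Complex.I) * s := by
    rw [hc, hHx, dotProduct_smul, smul_eq_mul]
  have hstar2 : star ((κ : ℂ) * Complex.I) = -((κ : ℂ) * Complex.I) := by
    simp [Complex.ext_iff]
  have hIs : -(((κ : ℂ) * Complex.I)) * s = ((κ : ℂ) * Complex.I) * s := by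
    have h := hstar
    rw [hc2, star_mul', hstar2, ← hsstar] at h
    exact h
  have hs0 : s = 0 := by
    have h2 : (2 * (((κ : ℂ) * Complex.I))) * s = 0 := by linear_combination - hIs
    rcases mul_eq_zero.mp h2 with h | h
    · exfalso
      have : ((κ : ℂ) ≠ 0) := by exact_mod_cast hκ
      simp [Complex.I_ne_zero, this] at h
    · exact h
  have hsum : s = ((∑ i, Complex.normSq (x i) : ℝ) : ℂ) := by
    rw [hs]
    simp only [dotProduct, Pi.star_apply, Complex.star_def, Complex.ofReal_sum]
    refine Finset.sum_congr rfl fun i _ => ?_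
    rw [mul_comm]; exact Complex.mul_conj (x i)
  have hsum0 : ∑ i, Complex.normSq (x i) = 0 := by
    have := hsum.symm.trans hs0
    exact_mod_cast this
  apply hx0
  funext i
  have := (Finset.sum_eq_zero_iff_of_nonneg
    (fun j _ => Complex.normSq_nonneg (x j))).mp hsum0 i (Finset.mem_univ i)
  exact Complex.normSq_eq_zero.mp this

lemma det_Mz_ne_zero (A : Matrix n n ℝ) (hA : A.IsSymm) {κ : ℝ} (hκ : κ ≠ 0) (v : n → ℝ) :
    (Mz A κ v).det ≠ 0 :=
  det_shift_ne_zero (isHermitian_aux A hA v) hκ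

lemma star_kI (κ : ℝ) : star ((κ : ℂ) * Complex.I) = -((κ : ℂ) * Complex.I) := by
  simp [Complex.ext_iff]

lemma im_diag_eq (A : Matrix n n ℝ) (hA : A.IsSymm) {κ : ℝ} (hκ : κ ≠ 0) (v : n → ℝ) (i : n) :
    ((Mz A κ v)⁻¹ i i).im = κ * ∑ j, Complex.normSq ((Mz A κ v)⁻¹ i j) := by
  set M := Mz A κ v with hM
  set G := M⁻¹ with hG
  have hdet : M.det ≠ 0 := det_Mz_ne_zero A hA hκ v
  have hu : IsUnit M.det := isUnit_iff_ne_zero.mpr hdet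
  have h2 : G * M = 1 := Matrix.nonsing_inv_mul M hu
  have hherm := isHermitian_aux A hA v
  have hMH : Mᴴ = ((Matrix.diagonal v + A).map (Complex.ofReal ·)) + ((κ : ℂ) * Complex.I) • 1 := by
    rw [hM]; unfold Mz
    rw [Matrix.conjTranspose_sub, Matrix.conjTranspose_smul, Matrix.conjTranspose_one,
      hherm.eq, star_kI]
    module
  have hdiff : Mᴴ - M = (2 * (κ : ℂ) * Complex.I) • (1 : Matrix n n ℂ) := by
    rw [hMH, hM]; unfold Mz; module
  have hdetH : Mᴴ.det ≠ 0 := by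
    rw [Matrix.det_conjTranspose]; exact star_ne_zero.mpr hdet
  have huH : IsUnit Mᴴ.det := isUnit_iff_ne_zero.mpr hdetH
  have hGH : Gᴴ = Mᴴ⁻¹ := by rw [hG, Matrix.conjTranspose_nonsing_inv]
  have h3 : Mᴴ * Gᴴ = 1 := by rw [hGH]; exact Matrix.mul_nonsing_inv _ huH
  have h1 : G * Mᴴ * Gᴴ = G := by rw [Matrix.mul_assoc, h3, Matrix.mul_one]
  have h4 : G * M * Gᴴ = Gᴴ := by rw [h2, Matrix.one_mul]
  have key : G - Gᴴ = (2 * (κ : ℂ) * Complex.I) • (G * Gᴴ) := by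
    calc G - Gᴴ = G * Mᴴ * Gᴴ - G * M * Gᴴ := by rw [h1, h4]
    _ = G * (Mᴴ - M) * Gᴴ := by rw [Matrix.mul_sub, Matrix.sub_mul]
    _ = (2 * (κ : ℂ) * Complex.I) • (G * Gᴴ) := by
        rw [hdiff, mul_smul_comm, Matrix.mul_one, Matrix.smul_mul]
  have hentry := congrArg (fun X => (X i i).im) key
  simp only [Matrix.sub_apply, Matrix.smul_apply, Matrix.conjTranspose_apply,
    Matrix.mul_apply, smul_eq_mul] at hentry
  have hsum : ∑ j, G i j * star (G i j) = ((∑ j, Complex.normSq (G i j) : ℝ) : ℂ) := by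
    rw [Complex.ofReal_sum]
    exact Finset.sum_congr rfl fun j _ => by rw [Complex.star_def, Complex.mul_conj]
  rw [hsum] at hentry
  have hL : (G i i - star (G i i)).im = 2 * (G i i).im := by
    simp [Complex.sub_im]; ring
  have hR : ((2 * (κ : ℂ) * Complex.I) * ((∑ j, Complex.normSq (G i j) : ℝ) : ℂ)).im
      = 2 * (κ * ∑ j, Complex.normSq (G i j)) := by
    simp [Complex.mul_im]; ring
  rw [hL, hR] at hentry
  linarith

lemma im_diag_nonneg (A : Matrix n n ℝ) (hA : A.IsSymm) {κ : ℝ} (hκ : 0 < κ) (v : n → ℝ) (i : n) :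
    0 ≤ ((Mz A κ v)⁻¹ i i).im := by
  rw [im_diag_eq A hA hκ.ne' v i]
  exact mul_nonneg hκ.le (Finset.sum_nonneg fun j _ => Complex.normSq_nonneg _)

lemma im_diag_ge (A : Matrix n n ℝ) (hA : A.IsSymm) {κ : ℝ} (hκ : 0 < κ) (v : n → ℝ) (i : n) :
    κ * Complex.normSq ((Mz A κ v)⁻¹ i i) ≤ ((Mz A κ v)⁻¹ i i).im := by
  rw [im_diag_eq A hA hκ.ne' v i]
  have : Complex.normSq ((Mz A κ v)⁻¹ i i) ≤ ∑ j, Complex.normSq ((Mz A κ v)⁻¹ i j) :=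
    Finset.single_le_sum (fun j _ => Complex.normSq_nonneg _) (Finset.mem_univ i)
  nlinarith

lemma sum_im_ge (A : Matrix n n ℝ) (hA : A.IsSymm) {κ : ℝ} (hκ : 0 < κ) (v : n → ℝ)
    {μ : ℝ} (hμ : μ ∈ spectrum ℝ (Matrix.diagonal v + A)) (hμκ : |μ| < κ) :
    1 / (2 * κ) ≤ ∑ i, ((Mz A κ v)⁻¹ i i).im := by
  set H := Matrix.diagonal v + A with hH
  set M := Mz A κ v with hM
  set G := M⁻¹ with hG
  have hdet : M.det ≠ 0 := det_Mz_ne_zero A hA hκ.ne' v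
  have hu : IsUnit M.det := isUnit_iff_ne_zero.mpr hdet
  have h2 : G * M = 1 := Matrix.nonsing_inv_mul M hu
  -- extract a real eigenvector
  have hdet0 : (μ • (1 : Matrix n n ℝ) - H).det = 0 := by
    have h := spectrum.mem_iff.mp hμ
    rw [Algebra.algebraMap_eq_smul_one] at h
    by_contra hne
    exact h ((Matrix.isUnit_iff_isUnit_det _).mpr (isUnit_iff_ne_zero.mpr hne))
  obtain ⟨x, hx0, hx⟩ := (Matrix.exists_mulVec_eq_zero_iff).mpr hdet0
  have hHx : H *ᵥ x = μ • x := by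
    rw [Matrix.sub_mulVec, Matrix.smul_mulVec, Matrix.one_mulVec, sub_eq_zero] at hx
    exact hx.symm
  set xc : n → ℂ := fun i => ((x i : ℝ) : ℂ) with hxc
  have hMx : M *ᵥ xc = ((μ : ℂ) - (κ : ℂ) * Complex.I) • xc := by
    rw [hM]; unfold Mz
    rw [Matrix.sub_mulVec, Matrix.smul_mulVec, Matrix.one_mulVec]
    have hmap : (H.map (Complex.ofReal ·)) *ᵥ xc = (μ : ℂ) • xc := by
      funext i
      have := (RingHom.map_mulVec Complex.ofRealHom H x i).symm
      simp only [Complex.ofRealHom_eq_coe] at this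
      calc ((H.map (Complex.ofReal ·)) *ᵥ xc) i = ((H *ᵥ x) i : ℂ) := by
            rw [← this]; rfl
      _ = ((μ : ℂ) • xc) i := by rw [hHx]; simp [hxc]
    rw [← hH, hmap, sub_smul]
  have hxcG : xc = ((μ : ℂ) - (κ : ℂ) * Complex.I) • (G *ᵥ xc) := by
    have := congrArg (fun y => G *ᵥ y) hMx
    simpa [Matrix.mulVec_mulVec, h2, Matrix.one_mulVec, Matrix.mulVec_smul] using this
  set Y : n → ℂ := G *ᵥ xc with hY
  set S : ℝ := ∑ i, Complex.normSq (xc i) with hS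
  set Q : ℝ := ∑ i, ∑ j, Complex.normSq (G i j) with hQ
  have hS_pos : 0 < S := by
    rcases Function.ne_iff.mp hx0 with ⟨i, hi⟩
    have : 0 < Complex.normSq (xc i) := by
      rw [Complex.normSq_pos]
      simpa [hxc] using hi
    exact lt_of_lt_of_le this (Finset.single_le_sum
      (fun j _ => Complex.normSq_nonneg _) (Finset.mem_univ i))
  have hnc : Complex.normSq ((μ : ℂ) - (κ : ℂ) * Complex.I) = μ ^ 2 + κ ^ 2 := by
    simp [Complex.normSq_apply]; ring
  have hSY : S = (μ ^ 2 + κ ^ 2) * ∑ i, Complex.normSq (Y i) := by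
    rw [hS, Finset.mul_sum]
    refine Finset.sum_congr rfl fun i _ => ?_
    rw [← hnc, ← Complex.normSq_mul]
    congr 1
    rw [hxcG]
    rfl
  have hCS : ∀ i, Complex.normSq (Y i) ≤ (∑ j, Complex.normSq (G i j)) * S := by
    intro i
    have habs : ‖Y i‖ ≤ ∑ j, ‖G i j‖ * ‖xc j‖ := by
      rw [hY]
      calc ‖(G *ᵥ xc) i‖ = ‖∑ j, G i j * xc j‖ := rfl
      _ ≤ ∑ j, ‖G i j * xc j‖ := norm_sum_le _ _
      _ = ∑ j, ‖G i j‖ * ‖xc j‖ := by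
          simp [norm_mul]
    have hcs2 : (∑ j, ‖G i j‖ * ‖xc j‖) ^ 2
        ≤ (∑ j, ‖G i j‖ ^ 2) * ∑ j, ‖xc j‖ ^ 2 :=
      Finset.sum_mul_sq_le_sq_mul_sq _ _ _
    have h1 : Complex.normSq (Y i) = ‖Y i‖ ^ 2 := (Complex.sq_norm _).symm
    have h2' : ∀ z : ℂ, ‖z‖ ^ 2 = Complex.normSq z := fun z => Complex.sq_norm z
    rw [h1]
    calc ‖Y i‖ ^ 2 ≤ (∑ j, ‖G i j‖ * ‖xc j‖) ^ 2 := by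
          have h0 : 0 ≤ ‖Y i‖ := norm_nonneg _
          nlinarith [habs]
    _ ≤ (∑ j, ‖G i j‖ ^ 2) * ∑ j, ‖xc j‖ ^ 2 := hcs2
    _ = (∑ j, Complex.normSq (G i j)) * S := by
          rw [hS]; congr 1 <;> exact Finset.sum_congr rfl fun j _ => h2' _
  have hsumY : ∑ i, Complex.normSq (Y i) ≤ Q * S := by
    rw [hQ, Finset.sum_mul]
    exact Finset.sum_le_sum fun i _ => hCS i
  have hQS : S ≤ (μ ^ 2 + κ ^ 2) * (Q * S) := by
    calc S = (μ ^ 2 + κ ^ 2) * ∑ i, Complex.normSq (Y i) := hSY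
    _ ≤ (μ ^ 2 + κ ^ 2) * (Q * S) :=
        mul_le_mul_of_nonneg_left hsumY (by positivity)
  have hμ2 : μ ^ 2 + κ ^ 2 < 2 * κ ^ 2 := by
    have : μ ^ 2 < κ ^ 2 := by
      have := abs_lt.mp hμκ
      nlinarith
    linarith
  have hQ_ge : 1 / (2 * κ ^ 2) ≤ Q := by
    have h1 : 1 ≤ (μ ^ 2 + κ ^ 2) * Q := by
      by_contra hcon
      push_neg at hcon
      nlinarith [hQS, hS_pos]
    have hpos : (0:ℝ) < μ ^ 2 + κ ^ 2 := by positivity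
    rw [div_le_iff₀ (by positivity)]
    nlinarith [h1, hpos, hμ2, sq_nonneg μ]
  have hfin : ∑ i, (G i i).im = κ * Q := by
    rw [hQ, Finset.mul_sum]
    exact Finset.sum_congr rfl fun i _ => im_diag_eq A hA hκ.ne' v i
  rw [hfin]
  rw [div_le_iff₀ (by positivity)] at hQ_ge ⊢
  nlinarith [hQ_ge]

lemma updateRow_updateRow' (M : Matrix n n ℂ) (i : n) (r u : n → ℂ) :
    (M.updateRow i r).updateRow i u = M.updateRow i u := by
  ext j k
  by_cases hj : j = i
  · subst hj; rw [Matrix.updateRow_self, Matrix.updateRow_self]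
  · rw [Matrix.updateRow_ne hj, Matrix.updateRow_ne hj, Matrix.updateRow_ne hj]

lemma update_resolvent (A : Matrix n n ℝ) (hA : A.IsSymm) {κ : ℝ} (hκ : 0 < κ)
    (v : n → ℝ) (i : n) :
    (∀ y : ℝ, (Mz A κ (Function.update v i y))⁻¹ i i = 0) ∨
    ∃ w : ℂ, κ ≤ w.im ∧
      ∀ y : ℝ, (Mz A κ (Function.update v i y))⁻¹ i i = ((y : ℂ) - w)⁻¹ := by
  set M := Mz A κ v with hM
  set α : ℂ := (M.updateRow i (Pi.single i 1)).det with hα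
  set β : ℂ := M.det with hβ
  have hβ0 : β ≠ 0 := det_Mz_ne_zero A hA hκ.ne' v
  have hMz_apply : ∀ (u : n → ℝ) (j k : n), Mz A κ u j k
      = (if j = k then ((u j : ℂ) - (κ : ℂ) * Complex.I) else 0) + ((A j k : ℝ) : ℂ) := by
    intro u j k
    unfold Mz
    simp only [Matrix.sub_apply, Matrix.map_apply, Matrix.add_apply, Matrix.diagonal_apply,
      Matrix.smul_apply, Matrix.one_apply, smul_eq_mul]
    split_ifs <;> push_cast <;> ring
  have hrow : ∀ y : ℝ, Mz A κ (Function.update v i y)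
      = M.updateRow i (M i + (((y - v i : ℝ)) : ℂ) • (Pi.single i 1 : n → ℂ)) := by
    intro y
    ext j k
    rw [Matrix.updateRow_apply]
    by_cases hj : j = i
    · subst hj
      simp only [if_pos rfl, Pi.add_apply, Pi.smul_apply, Pi.single_apply, smul_eq_mul]
      rw [hMz_apply, hM, hMz_apply]
      by_cases hk : j = k
      · subst hk
        rw [if_pos rfl, if_pos rfl, if_pos rfl, Function.update_self]
        push_cast
        ring
      · rw [if_neg hk, if_neg hk, if_neg (show ¬(k = j) from fun h => hk (h.symm))]
        push_cast
        ring
    · rw [if_neg hj, hMz_apply, hM, hMz_apply, Function.update_of_ne hj]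
  have hdetN : ∀ y : ℝ, (Mz A κ (Function.update v i y)).det
      = β + ((y - v i : ℝ) : ℂ) * α := by
    intro y
    rw [hrow y, Matrix.det_updateRow_add, Matrix.det_updateRow_smul,
      Matrix.updateRow_eq_self]
  have hadjN : ∀ y : ℝ, (Mz A κ (Function.update v i y)).adjugate i i = α := by
    intro y
    rw [Matrix.adjugate_apply, hrow y, updateRow_updateRow']
  have hGii : ∀ y : ℝ, (Mz A κ (Function.update v i y))⁻¹ i i
      = ((Mz A κ (Function.update v i y)).det)⁻¹ * α := by
    intro y
    rw [Matrix.inv_def, Matrix.smul_apply, hadjN y, Ring.inverse_eq_inv', smul_eq_mul]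
  by_cases hα0 : α = 0
  · left; intro y; rw [hGii y, hα0, mul_zero]
  · right
    set w : ℂ := (v i : ℂ) - β / α with hw
    have hformula : ∀ y : ℝ, (Mz A κ (Function.update v i y))⁻¹ i i = ((y : ℂ) - w)⁻¹ := by
      intro y
      rw [hGii y, hdetN y]
      have hz : β + ((y - v i : ℝ) : ℂ) * α = α * ((y : ℂ) - w) := by
        rw [hw]
        field_simp
        push_cast
        ring
      have hdd : α * ((y : ℂ) - w) ≠ 0 := by
        rw [← hz, ← hdetN y]
        exact det_Mz_ne_zero A hA hκ.ne' _
      have hy0 : (y : ℂ) - w ≠ 0 := fun hcon => hdd (by rw [hcon, mul_zero])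
      rw [hz, mul_inv]
      field_simp
    refine ⟨w, ?_, hformula⟩
    have hMv : M⁻¹ i i = (((v i : ℝ) : ℂ) - w)⁻¹ := by
      have h := hformula (v i)
      rw [Function.update_eq_self] at h
      exact h
    set z : ℂ := ((v i : ℝ) : ℂ) - w with hzdef
    have hz0 : z ≠ 0 := by
      rw [hzdef, hw]
      intro hcon
      apply hβ0
      have : β / α = 0 := by
        have := hcon
        simp only [sub_sub_cancel] at this
        exact this
      field_simp at this
      simpa using this
    have him := im_diag_ge A hA hκ v i
    rw [← hM, hMv] at him
    have h1 : (z⁻¹).im = -z.im / Complex.normSq z := Complex.inv_im z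
    have h2 : Complex.normSq z⁻¹ = (Complex.normSq z)⁻¹ := Complex.normSq_inv z
    have hpos : 0 < Complex.normSq z := Complex.normSq_pos.mpr hz0
    rw [h1, h2] at him
    have hzim : z.im = -w.im := by rw [hzdef]; simp
    rw [hzim] at him
    have : κ * (Complex.normSq z)⁻¹ ≤ w.im / Complex.normSq z := by
      simpa using him
    rw [div_eq_mul_inv] at this
    have := mul_le_mul_of_nonneg_right this hpos.le
    calc κ = κ * (Complex.normSq z)⁻¹ * Complex.normSq z := by field_simp
    _ ≤ w.im * (Complex.normSq z)⁻¹ * Complex.normSq z := this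
    _ = w.im := by field_simp

lemma Mz_apply_gen (A : Matrix n n ℝ) (κ : ℝ) (v : n → ℝ) (j k : n) :
    Mz A κ v j k
      = (if j = k then ((v j : ℂ) - (κ : ℂ) * Complex.I) else 0) + ((A j k : ℝ) : ℂ) := by
  unfold Mz
  simp only [Matrix.sub_apply, Matrix.map_apply, Matrix.add_apply, Matrix.diagonal_apply,
    Matrix.smul_apply, Matrix.one_apply, smul_eq_mul]
  split_ifs <;> push_cast <;> ring

lemma continuous_G (A : Matrix n n ℝ) (hA : A.IsSymm) {κ : ℝ} (hκ : κ ≠ 0) (i j : n) :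
    Continuous fun v : n → ℝ => (Mz A κ v)⁻¹ i j := by
  have hMc : Continuous fun v : n → ℝ => Mz A κ v := by
    apply continuous_matrix
    intro a b
    have : (fun v : n → ℝ => Mz A κ v a b)
        = fun v => (if a = b then ((v a : ℂ) - (κ : ℂ) * Complex.I) else 0) + ((A a b : ℝ) : ℂ) := by
      funext v; exact Mz_apply_gen A κ v a b
    rw [this]
    by_cases hab : a = b
    · simp only [if_pos hab]
      exact (((Complex.continuous_ofReal.comp (continuous_apply a)).sub
        continuous_const).add continuous_const)
    · simp only [if_neg hab]
      exact continuous_const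
  have hdetc : Continuous fun v : n → ℝ => (Mz A κ v).det := hMc.matrix_det
  have hadjc : Continuous fun v : n → ℝ => (Mz A κ v).adjugate i j :=
    (hMc.matrix_adjugate).matrix_elem i j
  have heq : ∀ v : n → ℝ, (Mz A κ v)⁻¹ i j
      = ((Mz A κ v).det)⁻¹ * (Mz A κ v).adjugate i j := by
    intro v
    rw [Matrix.inv_def, Matrix.smul_apply, Ring.inverse_eq_inv', smul_eq_mul]
  have hcont : Continuous fun v : n → ℝ => ((Mz A κ v).det)⁻¹ * (Mz A κ v).adjugate i j :=
    (hdetc.inv₀ fun v => det_Mz_ne_zero A hA hκ v).mul hadjc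
  exact hcont.congr fun v => (heq v).symm

lemma site_integral {κ : ℝ} (hκ : 0 < κ) {w : ℂ} (hw : κ ≤ w.im) (μm : Measure ℝ)
    (ρ : ℝ≥0) (hμ : μm ≤ (ρ : ℝ≥0∞) • volume) :
    ∫⁻ y : ℝ, ENNReal.ofReal ((((y : ℂ) - w)⁻¹).im) ∂μm ≤ ENNReal.ofReal (π * ρ) := by
  set b := w.im with hbdef
  set a := w.re with hadef
  have hb : 0 < b := lt_of_lt_of_le hκ hw
  have hfun : ∀ y : ℝ, (((y : ℂ) - w)⁻¹).im = b⁻¹ * (1 + ((y - a) / b) ^ 2)⁻¹ := by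
    intro y
    rw [Complex.inv_im]
    have h1 : ((y : ℂ) - w).im = -b := by simp [hbdef]
    have h2 : Complex.normSq ((y : ℂ) - w) = (y - a) ^ 2 + b ^ 2 := by
      simp [Complex.normSq_apply, hadef, hbdef]
      ring
    rw [h1, h2]
    have hden : (y - a) ^ 2 + b ^ 2 > 0 := by positivity
    field_simp
    ring
  have hint : Integrable (fun y : ℝ => b⁻¹ * (1 + ((y - a) / b) ^ 2)⁻¹) := by
    have h1 : Integrable (fun t : ℝ => (1 + t ^ 2)⁻¹) := integrable_inv_one_add_sq
    have h2 : Integrable (fun y : ℝ => (1 + (y / b) ^ 2)⁻¹) := h1.comp_div hb.ne'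
    have h3 : Integrable (fun y : ℝ => (1 + ((y - a) / b) ^ 2)⁻¹) := h2.comp_sub_right a
    exact h3.const_mul _
  have hpos : ∀ y : ℝ, 0 ≤ b⁻¹ * (1 + ((y - a) / b) ^ 2)⁻¹ := fun y => by positivity
  have hval : ∫ y : ℝ, b⁻¹ * (1 + ((y - a) / b) ^ 2)⁻¹ = π := by
    rw [integral_const_mul]
    have h3 : ∫ y : ℝ, (1 + ((y - a) / b) ^ 2)⁻¹ = ∫ y : ℝ, (1 + (y / b) ^ 2)⁻¹ :=
      integral_sub_right_eq_self (fun y => (1 + (y / b) ^ 2)⁻¹) a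
    have h4 : ∫ y : ℝ, (1 + (y / b) ^ 2)⁻¹ = |b| • ∫ t : ℝ, (1 + t ^ 2)⁻¹ :=
      Measure.integral_comp_div (fun t => (1 + t ^ 2)⁻¹) b
    rw [h3, h4, integral_univ_inv_one_add_sq, smul_eq_mul, abs_of_pos hb]
    field_simp
  calc ∫⁻ y : ℝ, ENNReal.ofReal ((((y : ℂ) - w)⁻¹).im) ∂μm
      ≤ ∫⁻ y : ℝ, ENNReal.ofReal ((((y : ℂ) - w)⁻¹).im) ∂((ρ : ℝ≥0∞) • volume) :=
        lintegral_mono' hμ le_rfl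
  _ = (ρ : ℝ≥0∞) * ∫⁻ y : ℝ, ENNReal.ofReal ((((y : ℂ) - w)⁻¹).im) ∂volume :=
        lintegral_smul_measure _ _
  _ = (ρ : ℝ≥0∞) * ENNReal.ofReal π := by
      congr 1
      have : (fun y : ℝ => ENNReal.ofReal ((((y : ℂ) - w)⁻¹).im))
          = fun y : ℝ => ENNReal.ofReal (b⁻¹ * (1 + ((y - a) / b) ^ 2)⁻¹) := by
        funext y; rw [hfun y]
      rw [this, ← ofReal_integral_eq_lintegral_ofReal hint
        (Filter.Eventually.of_forall hpos), hval]
  _ ≤ ENNReal.ofReal (π * ρ) := by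
      rw [← ENNReal.ofReal_coe_nnreal, ← ENNReal.ofReal_mul (by positivity : (0:ℝ) ≤ (ρ:ℝ))]
      exact ENNReal.ofReal_le_ofReal (le_of_eq (mul_comm _ _))

lemma lmarginal_const_prob {ι : Type} [DecidableEq ι] (μ : ι → Measure ℝ)
    [∀ i, IsProbabilityMeasure (μ i)] (s : Finset ι) (c : ℝ≥0∞) (x : ι → ℝ) :
    (∫⋯∫⁻_s, (fun _ => c) ∂μ) x = c := by
  haveI : IsProbabilityMeasure (Measure.pi fun i : s => μ i) := inferInstance
  simp only [MeasureTheory.lmarginal, lintegral_const, measure_univ, mul_one]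

lemma map_eq_pi {Ωp : Type} [MeasureSpace Ωp] [IsProbabilityMeasure (ℙ : Measure Ωp)]
    (V : n → Ωp → ℝ) (hmeas : ∀ i, Measurable (V i))
    (hind : iIndepFun V ℙ) :
    (ℙ : Measure Ωp).map (fun ω i => V i ω)
      = Measure.pi (fun i => (ℙ : Measure Ωp).map (V i)) := by
  haveI : ∀ i, IsProbabilityMeasure ((ℙ : Measure Ωp).map (V i)) :=
    fun i => Measure.isProbabilityMeasure_map (hmeas i).aemeasurable
  refine (Measure.pi_eq ?_).symm
  intro s hs
  rw [Measure.map_apply (measurable_pi_lambda _ fun i => hmeas i) (MeasurableSet.univ_pi hs)]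
  have hpre : (fun ω (i : n) => V i ω) ⁻¹' (Set.univ.pi s)
      = ⋂ i ∈ (Finset.univ : Finset n), V i ⁻¹' s i := by
    ext ω; simp [Set.mem_pi]
  rw [hpre, hind.measure_inter_preimage_eq_mul Finset.univ (fun i _ => hs i)]
  refine Finset.prod_congr rfl fun i _ => ?_
  rw [Measure.map_apply (hmeas i) (hs i)]

end WegnerAux


/-- Wegner-type estimate \eqref{1.4}.
Let `Ω₁` be a finite index set, `A` a fixed real symmetric `Ω₁ × Ω₁` matrix, and
`(V_i)_{i ∈ Ω₁}` independent real random variables whose laws have densities bounded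
by `ρ`.  Let `D_V = Σ_{i ∈ Ω₁} V_i eᵢ ⊗ eᵢ`.  Then for every `κ > 0`, the probability
that some eigenvalue of `D_V + A` has absolute value less than `κ` is at most
`C·ρ·κ·|Ω₁|`, with `C` an absolute constant. -/
theorem statement1 :
    ∃ C : ℝ, 0 < C ∧
      ∀ (Ω₁ : Type) [Fintype Ω₁] [DecidableEq Ω₁] (A : Matrix Ω₁ Ω₁ ℝ), A.IsSymm →
      ∀ (Ωp : Type) [MeasureSpace Ωp], IsProbabilityMeasure (ℙ : Measure Ωp) →
      ∀ (ρ : ℝ≥0) (V : Ω₁ → Ωp → ℝ),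
        (∀ i, Measurable (V i)) →
        iIndepFun V ℙ →
        (∀ i, (ℙ : Measure Ωp).map (V i) ≤ (ρ : ℝ≥0∞) • volume) →
      ∀ κ : ℝ, 0 < κ →
        (ℙ : Measure Ωp)
          {ω | ∃ μ ∈ spectrum ℝ (Matrix.diagonal (fun i => V i ω) + A), |μ| < κ}
          ≤ ENNReal.ofReal (C * ρ * κ * Fintype.card Ω₁) := by
  refine ⟨8, by norm_num, ?_⟩
  intro Ω₁ _ _ A hA Ωp _ hprob ρ V hmeas hind hρ κ hκ
  classical
  haveI := hprob
  set μi : Ω₁ → Measure ℝ := fun i => (ℙ : Measure Ωp).map (V i) with hμi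
  haveI hPμ : ∀ i, IsProbabilityMeasure (μi i) :=
    fun i => Measure.isProbabilityMeasure_map (hmeas i).aemeasurable
  set G : (Ω₁ → ℝ) → Matrix Ω₁ Ω₁ ℂ := fun v => (WegnerAux.Mz A κ v)⁻¹ with hGdef
  set F : (Ω₁ → ℝ) → ℝ≥0∞ := fun v => ∑ i, ENNReal.ofReal ((G v i i).im) with hF
  have hGcont : ∀ i : Ω₁, Continuous fun v => G v i i :=
    fun i => WegnerAux.continuous_G A hA hκ.ne' i i
  have hfi_meas : ∀ i : Ω₁, Measurable fun v => ENNReal.ofReal ((G v i i).im) := fun i =>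
    (ENNReal.continuous_ofReal.comp (Complex.continuous_im.comp (hGcont i))).measurable
  have hFmeas : Measurable F :=
    Finset.measurable_sum _ fun i _ => hfi_meas i
  set ε : ℝ≥0∞ := ENNReal.ofReal (1 / (2 * κ)) with hε
  set T : Set (Ω₁ → ℝ) := {v | ε ≤ F v} with hT
  have hTmeas : MeasurableSet T := measurableSet_le measurable_const hFmeas
  have hVmeas : Measurable fun ω (i : Ω₁) => V i ω := measurable_pi_lambda _ fun i => hmeas i
  have hsub : {ω | ∃ μ ∈ spectrum ℝ (Matrix.diagonal (fun i => V i ω) + A), |μ| < κ}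
      ⊆ (fun ω (i : Ω₁) => V i ω) ⁻¹' T := by
    intro ω hω
    obtain ⟨μ, hμ, hμκ⟩ := hω
    have hge := WegnerAux.sum_im_ge A hA hκ (fun i => V i ω) hμ hμκ
    have hnn : ∀ i : Ω₁, 0 ≤ ((G (fun i => V i ω)) i i).im := fun i =>
      WegnerAux.im_diag_nonneg A hA hκ _ i
    show ε ≤ F (fun i => V i ω)
    calc ε = ENNReal.ofReal (1 / (2 * κ)) := rfl
    _ ≤ ENNReal.ofReal (∑ i, ((G (fun i => V i ω)) i i).im) := ENNReal.ofReal_le_ofReal hge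
    _ = ∑ i, ENNReal.ofReal ((G (fun i => V i ω)) i i).im :=
        ENNReal.ofReal_sum_of_nonneg (fun i _ => hnn i)
  have hmap := WegnerAux.map_eq_pi V hmeas hind
  have key1 : (ℙ : Measure Ωp)
      {ω | ∃ μ ∈ spectrum ℝ (Matrix.diagonal (fun i => V i ω) + A), |μ| < κ}
      ≤ Measure.pi μi T := by
    calc (ℙ : Measure Ωp) {ω | ∃ μ ∈ spectrum ℝ (Matrix.diagonal (fun i => V i ω) + A), |μ| < κ}
        ≤ (ℙ : Measure Ωp) ((fun ω (i : Ω₁) => V i ω) ⁻¹' T) := measure_mono hsub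
    _ = ((ℙ : Measure Ωp).map (fun ω (i : Ω₁) => V i ω)) T :=
        (Measure.map_apply hVmeas hTmeas).symm
    _ = Measure.pi μi T := by rw [hmap]
  have hmarkov : ε * Measure.pi μi T ≤ ∫⁻ v, F v ∂(Measure.pi μi) :=
    mul_meas_ge_le_lintegral₀ hFmeas.aemeasurable ε
  have hsite : ∀ i : Ω₁, (∫⁻ v, ENNReal.ofReal ((G v i i).im) ∂(Measure.pi μi))
      ≤ ENNReal.ofReal (π * ρ) := by
    intro i
    rw [lintegral_eq_lmarginal_univ (fun _ => (0:ℝ))]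
    rw [MeasureTheory.lmarginal_erase' _ (hfi_meas i) (Finset.mem_univ i)]
    calc (∫⋯∫⁻_(Finset.univ.erase i),
          (fun x => ∫⁻ y, ENNReal.ofReal ((G (Function.update x i y) i i).im) ∂μi i) ∂μi)
          (fun _ => 0)
        ≤ (∫⋯∫⁻_(Finset.univ.erase i), (fun _ => ENNReal.ofReal (π * ρ)) ∂μi)
          (fun _ => 0) := by
          apply MeasureTheory.lmarginal_mono
          intro x
          rcases WegnerAux.update_resolvent A hA hκ x i with h0 | ⟨w, hwim, hwf⟩
          · have hzero : (fun y : ℝ => ENNReal.ofReal ((G (Function.update x i y) i i).im))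
                = fun _ => 0 := by
              funext y
              rw [hGdef]
              simp only []
              rw [h0 y]
              simp
            show (∫⁻ y, ENNReal.ofReal ((G (Function.update x i y) i i).im) ∂μi i)
              ≤ ENNReal.ofReal (π * ρ)
            rw [hzero, lintegral_zero]
            exact zero_le
          · have heqf : (fun y : ℝ => ENNReal.ofReal ((G (Function.update x i y) i i).im))
                = fun y : ℝ => ENNReal.ofReal ((((y : ℂ) - w)⁻¹).im) := by
              funext y
              rw [hGdef]
              simp only []
              rw [hwf y]
            show (∫⁻ y, ENNReal.ofReal ((G (Function.update x i y) i i).im) ∂μi i)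
              ≤ ENNReal.ofReal (π * ρ)
            rw [heqf]
            exact WegnerAux.site_integral hκ hwim (μi i) ρ (hρ i)
    _ = ENNReal.ofReal (π * ρ) := WegnerAux.lmarginal_const_prob μi _ _ _
  have hsum : (∫⁻ v, F v ∂(Measure.pi μi))
      ≤ (Fintype.card Ω₁ : ℝ≥0∞) * ENNReal.ofReal (π * ρ) := by
    have : (∫⁻ v, F v ∂(Measure.pi μi))
        = ∑ i, ∫⁻ v, ENNReal.ofReal ((G v i i).im) ∂(Measure.pi μi) := by
      rw [hF]
      exact lintegral_finset_sum _ (fun i _ => hfi_meas i)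
    rw [this]
    calc ∑ i, ∫⁻ v, ENNReal.ofReal ((G v i i).im) ∂(Measure.pi μi)
        ≤ ∑ _i : Ω₁, ENNReal.ofReal (π * ρ) := Finset.sum_le_sum fun i _ => hsite i
    _ = (Fintype.card Ω₁ : ℝ≥0∞) * ENNReal.ofReal (π * ρ) := by
        rw [Finset.sum_const, Finset.card_univ, nsmul_eq_mul]
  have hε0 : ε ≠ 0 := by
    rw [hε]
    exact (ENNReal.ofReal_pos.mpr (by positivity)).ne'
  have hεtop : ε ≠ ⊤ := ENNReal.ofReal_ne_top
  have hfinal : Measure.pi μi T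
      ≤ ε⁻¹ * ((Fintype.card Ω₁ : ℝ≥0∞) * ENNReal.ofReal (π * ρ)) := by
    calc Measure.pi μi T = ε⁻¹ * (ε * Measure.pi μi T) := by
          rw [← mul_assoc, ENNReal.inv_mul_cancel hε0 hεtop, one_mul]
    _ ≤ ε⁻¹ * (∫⁻ v, F v ∂(Measure.pi μi)) := mul_le_mul_right hmarkov _
    _ ≤ ε⁻¹ * ((Fintype.card Ω₁ : ℝ≥0∞) * ENNReal.ofReal (π * ρ)) := mul_le_mul_right hsum _
  have hεinv : ε⁻¹ = ENNReal.ofReal (2 * κ) := by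
    rw [hε, one_div, ENNReal.ofReal_inv_of_pos (by positivity), inv_inv]
  have hbound : ε⁻¹ * ((Fintype.card Ω₁ : ℝ≥0∞) * ENNReal.ofReal (π * ρ))
      ≤ ENNReal.ofReal (8 * ρ * κ * Fintype.card Ω₁) := by
    rw [hεinv, ← ENNReal.ofReal_natCast (Fintype.card Ω₁),
      ← ENNReal.ofReal_mul (by positivity : (0:ℝ) ≤ (Fintype.card Ω₁ : ℝ)),
      ← ENNReal.ofReal_mul (by positivity : (0:ℝ) ≤ 2 * κ)]
    apply ENNReal.ofReal_le_ofReal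
    have hc : (0:ℝ) ≤ (Fintype.card Ω₁ : ℝ) := Nat.cast_nonneg _
    have hρ0 : (0:ℝ) ≤ (ρ : ℝ) := ρ.coe_nonneg
    nlinarith [Real.pi_le_four,
      mul_nonneg (mul_nonneg (mul_nonneg hκ.le hρ0) hc) (sub_nonneg.mpr Real.pi_le_four)]
  exact key1.trans (hfinal.trans hbound)
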